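/- Let C be a solid cylinder in ℝ^d of radius 1 whose axis segment has length less than s√2 for some natural number s ≥ 1. Then C contains at most 2s points with pairwise distances at least 2. -/

import Mathlib

open Real RealInnerProductSpace

set_option maxHeartbeats 1000000

/-- Core algebraic infeasibility underlying the three-point lemma. -/
theorem cylinder_capacity_algA (a b : ℝ) (ha : 0 ≤ a) (hb : 0 ≤ b) (hγ : (a+b)^2 < 2)
    (h1 : 4 ≤ a^2 + (a+b)^2 + 2*b) (h2 : 4 ≤ b^2 + (a+b)^2 + 2*a) : False := by
  set γ := a + b with hγdef
  have hγ0 : 0 ≤ γ := by positivity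
  have hγ15 : γ < 3/2 := by nlinarith
  have hD2 : (0:ℝ) ≤ 5 - 2*γ - γ^2 := by nlinarith
  have h1' : 5 - 2*γ - γ^2 ≤ (1-a)^2 := by nlinarith
  have h2' : 5 - 2*γ - γ^2 ≤ (1-b)^2 := by nlinarith
  have ha1 : a ≤ 1 := by
    by_contra h
    push_neg at h
    have h5 : (a-1)^2 ≤ (γ-1)^2 := by nlinarith
    nlinarith
  have hb1 : b ≤ 1 := by
    by_contra h
    push_neg at h
    have h5 : (b-1)^2 ≤ (γ-1)^2 := by nlinarith
    nlinarith
  have hx : (0:ℝ) ≤ 1 - a := by linarith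
  have hy : (0:ℝ) ≤ 1 - b := by linarith
  have hmul : (5 - 2*γ - γ^2) * (5 - 2*γ - γ^2) ≤ (1-a)^2 * (1-b)^2 :=
    mul_le_mul h1' h2' hD2 (by positivity)
  have key : 5 - 2*γ - γ^2 ≤ (1-a)*(1-b) := by
    nlinarith [mul_nonneg hx hy, hD2, hmul]
  nlinarith [key, h1', h2']

/-- Three radial vectors of norm ≤ 1 with the separation constraints force `(a+b)² ≥ 2`. -/
theorem cylinder_capacity_geomB {E : Type*} [NormedAddCommGroup E] [InnerProductSpace ℝ E]
    (u w z : E) (hu : ‖u‖ ≤ 1) (hw : ‖w‖ ≤ 1) (hz : ‖z‖ ≤ 1)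
    (a b : ℝ) (ha : 0 ≤ a) (hb : 0 ≤ b)
    (huw : 4 - a^2 ≤ ‖u - w‖^2) (hwz : 4 - b^2 ≤ ‖w - z‖^2)
    (huz : 4 - (a+b)^2 ≤ ‖u - z‖^2) : 2 ≤ (a+b)^2 := by
  by_contra hcon
  push_neg at hcon
  have e1 : ‖u - w‖^2 = ‖u‖^2 - 2 * ⟪u, w⟫ + ‖w‖^2 := norm_sub_sq_real u w
  have e2 : ‖w - z‖^2 = ‖w‖^2 - 2 * ⟪w, z⟫ + ‖z‖^2 := norm_sub_sq_real w z
  have e3 : ‖u - z‖^2 = ‖u‖^2 - 2 * ⟪u, z⟫ + ‖z‖^2 := norm_sub_sq_real u z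
  have hu0 : 0 ≤ ‖u‖ := norm_nonneg _
  have hw0 : 0 ≤ ‖w‖ := norm_nonneg _
  have hz0 : 0 ≤ ‖z‖ := norm_nonneg _
  -- inner product upper bounds
  have iuw : 2 * ⟪u, w⟫ ≤ a^2 - 2 := by nlinarith
  have iwz : 2 * ⟪w, z⟫ ≤ b^2 - 2 := by nlinarith
  have iuz : 2 * ⟪u, z⟫ ≤ (a+b)^2 - 2 := by nlinarith
  -- ‖w + z‖ ≤ b
  have hwzsum : ‖w + z‖ ≤ b := by
    have h' : ‖w + z‖^2 ≤ b^2 := by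
      have := norm_add_sq_real w z
      nlinarith
    nlinarith [norm_nonneg (w + z)]
  have huvsum : ‖u + w‖ ≤ a := by
    have h' : ‖u + w‖^2 ≤ a^2 := by
      have := norm_add_sq_real u w
      nlinarith
    nlinarith [norm_nonneg (u + w)]
  -- Cauchy–Schwarz at the two outer vertices
  have cs1 : -(b : ℝ) ≤ ⟪u, w⟫ + ⟪u, z⟫ := by
    have h1 : |⟪u, w + z⟫| ≤ ‖u‖ * ‖w + z‖ := abs_real_inner_le_norm u (w + z)
    have h2 : ⟪u, w + z⟫ = ⟪u, w⟫ + ⟪u, z⟫ := inner_add_right u w z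
    have h3 : ‖u‖ * ‖w + z‖ ≤ 1 * b :=
      mul_le_mul hu hwzsum (norm_nonneg _) zero_le_one
    rw [h2] at h1
    have := abs_le.mp h1
    linarith [this.1]
  have cs2 : -(a : ℝ) ≤ ⟪u, z⟫ + ⟪w, z⟫ := by
    have h1 : |⟪u + w, z⟫| ≤ ‖u + w‖ * ‖z‖ := abs_real_inner_le_norm (u + w) z
    have h2 : ⟪u + w, z⟫ = ⟪u, z⟫ + ⟪w, z⟫ := inner_add_left u w z
    have h3 : ‖u + w‖ * ‖z‖ ≤ a * 1 :=
      mul_le_mul huvsum hz (norm_nonneg _) ha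
    rw [h2] at h1
    have := abs_le.mp h1
    linarith [this.1]
  exact cylinder_capacity_algA a b ha hb hcon (by linarith) (by linarith)

/-- a solid cylinder of radius 1 whose axis segment has length `< s√2`
contains at most `2s` points with pairwise distances at least 2. -/
theorem cylinder_capacity {d : ℕ} (s : ℕ) (hs : 1 ≤ s)
    (p v : EuclideanSpace ℝ (Fin d)) (hv : ‖v‖ = 1) (L : ℝ) (hL0 : 0 ≤ L)
    (hL : L < s * Real.sqrt 2)
    (P : Finset (EuclideanSpace ℝ (Fin d)))
    (hP : ∀ x ∈ P, 0 ≤ (inner ℝ (x - p) v : ℝ) ∧ (inner ℝ (x - p) v : ℝ) ≤ L ∧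
      ‖x - p - (inner ℝ (x - p) v : ℝ) • v‖ ≤ 1)
    (hsep : ∀ x ∈ P, ∀ y ∈ P, x ≠ y → 2 ≤ dist x y) :
    P.card ≤ 2 * s := by
  classical
  set t : EuclideanSpace ℝ (Fin d) → ℝ := fun x => ⟪x - p, v⟫ with ht
  set r : EuclideanSpace ℝ (Fin d) → EuclideanSpace ℝ (Fin d) := fun x => x - p - t x • v with hr
  have hvv : ⟪v, v⟫ = (1:ℝ) := by
    rw [real_inner_self_eq_norm_sq, hv]; norm_num
  have hr_orth : ∀ x, ⟪r x, v⟫ = 0 := by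
    intro x
    simp only [hr, ht, inner_sub_left, real_inner_smul_left, hvv]
    ring
  -- Pythagoras
  have hdist : ∀ x y, dist x y ^ 2 = (t x - t y)^2 + ‖r x - r y‖^2 := by
    intro x y
    have hxy : x - y = (t x - t y) • v + (r x - r y) := by
      simp only [hr]
      module
    have horth : ⟪(t x - t y) • v, r x - r y⟫ = 0 := by
      have hx0 : ⟪v, r x⟫ = (0:ℝ) := by rw [real_inner_comm]; exact hr_orth x
      have hy0 : ⟪v, r y⟫ = (0:ℝ) := by rw [real_inner_comm]; exact hr_orth y
      rw [real_inner_smul_left, inner_sub_right, hx0, hy0]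
      ring
    rw [dist_eq_norm, hxy, norm_add_sq_real, horth]
    have : ‖(t x - t y) • v‖ = |t x - t y| := by
      rw [norm_smul, hv, Real.norm_eq_abs, mul_one]
    rw [this, sq_abs]
    ring
  have hsep' : ∀ x ∈ P, ∀ y ∈ P, x ≠ y → 4 - (t x - t y)^2 ≤ ‖r x - r y‖^2 := by
    intro x hx y hy hne
    have h1 := hsep x hx y hy hne
    have h2 : (2:ℝ)^2 ≤ dist x y ^ 2 := by
      have := dist_nonneg (x := x) (y := y)
      nlinarith
    have := hdist x y
    nlinarith
  -- three-point lemma (ordered)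
  have h3 : ∀ x ∈ P, ∀ y ∈ P, ∀ z ∈ P, x ≠ y → x ≠ z → y ≠ z →
      t x ≤ t y → t y ≤ t z → 2 ≤ (t z - t x)^2 := by
    intro x hx y hy z hz hxy hxz hyz htxy htyz
    have hx1 := (hP x hx).2.2
    have hy1 := (hP y hy).2.2
    have hz1 := (hP z hz).2.2
    have key := cylinder_capacity_geomB (r x) (r y) (r z) hx1 hy1 hz1 (t y - t x) (t z - t y)
      (by linarith) (by linarith)
      (by have := hsep' x hx y hy hxy; nlinarith)
      (by have := hsep' y hy z hz hyz; nlinarith)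
      (by have := hsep' x hx z hz hxz; nlinarith)
    calc (2:ℝ) ≤ ((t y - t x) + (t z - t y))^2 := key
    _ = (t z - t x)^2 := by ring
  -- counting
  have hs2 : (0:ℝ) < Real.sqrt 2 := by positivity
  have h2sq : Real.sqrt 2 ^ 2 = 2 := Real.sq_sqrt (by norm_num)
  set f : EuclideanSpace ℝ (Fin d) → ℕ := fun x => ⌊t x / Real.sqrt 2⌋₊ with hf
  have hmaps : ∀ x ∈ P, f x ∈ Finset.range s := by
    intro x hx
    rw [Finset.mem_range, hf]
    have h0 : 0 ≤ t x / Real.sqrt 2 := div_nonneg (hP x hx).1 hs2.le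
    rw [Nat.floor_lt h0]
    rw [div_lt_iff₀ hs2]
    calc t x ≤ L := (hP x hx).2.1
    _ < s * Real.sqrt 2 := hL
  have hfib : ∀ k ∈ Finset.range s, (P.filter (fun x => f x = k)).card ≤ 2 := by
    intro k _
    by_contra hcon
    push_neg at hcon
    obtain ⟨x, hx, y, hy, z, hz, hxy, hxz, hyz⟩ := Finset.two_lt_card.mp hcon
    simp only [Finset.mem_filter] at hx hy hz
    -- all t values are within [k√2, (k+1)√2)
    have hin : ∀ w, w ∈ P → f w = k → (k:ℝ) * Real.sqrt 2 ≤ t w ∧ t w < (k+1) * Real.sqrt 2 := by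
      intro w hw hfw
      have h0 : 0 ≤ t w / Real.sqrt 2 := div_nonneg (hP w hw).1 hs2.le
      have := (Nat.floor_eq_iff h0).mp hfw
      constructor
      · calc (k:ℝ) * Real.sqrt 2 ≤ (t w / Real.sqrt 2) * Real.sqrt 2 := by
              apply mul_le_mul_of_nonneg_right this.1 hs2.le
        _ = t w := by field_simp
      · calc t w = (t w / Real.sqrt 2) * Real.sqrt 2 := by field_simp
        _ < ((k:ℝ)+1) * Real.sqrt 2 := by
              apply mul_lt_mul_of_pos_right this.2 hs2
    have hbx := hin x hx.1 hx.2
    have hby := hin y hy.1 hy.2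
    have hbz := hin z hz.1 hz.2
    -- any ordered pair among them has t-difference < √2, so square < 2
    have hsmall : ∀ a b : ℝ,
        (k:ℝ) * Real.sqrt 2 ≤ a → a < (k+1) * Real.sqrt 2 →
        (k:ℝ) * Real.sqrt 2 ≤ b → b < (k+1) * Real.sqrt 2 →
        a ≤ b → (b - a)^2 < 2 := by
      intro a b h1 h2 h3 h4 h5
      have hd : b - a < Real.sqrt 2 := by nlinarith
      have hd0 : 0 ≤ b - a := by linarith
      nlinarith
    -- order the three points
    rcases le_total (t x) (t y) with h1 | h1 <;>
      rcases le_total (t y) (t z) with h2 | h2 <;>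
      rcases le_total (t x) (t z) with h0 | h0
    · exact absurd (h3 x hx.1 y hy.1 z hz.1 hxy hxz hyz h1 h2)
        (not_le.mpr (hsmall _ _ hbx.1 hbx.2 hbz.1 hbz.2 h0))
    · exact absurd (h3 x hx.1 y hy.1 z hz.1 hxy hxz hyz h1 h2)
        (not_le.mpr (hsmall _ _ hbx.1 hbx.2 hbz.1 hbz.2 (le_trans h1 h2)))
    · exact absurd (h3 x hx.1 z hz.1 y hy.1 hxz hxy hyz.symm h0 h2)
        (not_le.mpr (hsmall _ _ hbx.1 hbx.2 hby.1 hby.2 h1))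
    · exact absurd (h3 z hz.1 x hx.1 y hy.1 hxz.symm hyz.symm hxy h0 h1)
        (not_le.mpr (hsmall _ _ hbz.1 hbz.2 hby.1 hby.2 (le_trans h0 h1)))
    · exact absurd (h3 y hy.1 x hx.1 z hz.1 hxy.symm hyz hxz h1 h0)
        (not_le.mpr (hsmall _ _ hby.1 hby.2 hbz.1 hbz.2 (le_trans h1 h0)))
    · exact absurd (h3 y hy.1 z hz.1 x hx.1 hyz hxy.symm hxz.symm h2 h0)
        (not_le.mpr (hsmall _ _ hby.1 hby.2 hbx.1 hbx.2 (le_trans h2 h0)))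
    · exact absurd (h3 z hz.1 y hy.1 x hx.1 hyz.symm hxz.symm hxy.symm h2 h1)
        (not_le.mpr (hsmall _ _ hbz.1 hbz.2 hbx.1 hbx.2 (le_trans h2 h1)))
    · exact absurd (h3 z hz.1 y hy.1 x hx.1 hyz.symm hxz.symm hxy.symm h2 h1)
        (not_le.mpr (hsmall _ _ hbz.1 hbz.2 hbx.1 hbx.2 (le_trans h2 h1)))
  calc P.card ≤ 2 * (Finset.range s).card :=
        Finset.card_le_mul_card_image_of_maps_to hmaps 2 hfib
  _ = 2 * s := by rw [Finset.card_range]
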